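/- Let M ≥ 1 and let a = a_1…a_m be a primitive word with m ≥ 2. Then the reflection recurrence word R(a) satisfies m/2 ≤ |R(a)| ≤ m, where |R(a)| denotes its length. -/

import Mathlib

namespace Paper

/-- A digit sequence over the alphabet `{0,…,M}` (0-indexed: `x 0` is the digit `x_1`). -/
def IsSeq (M : ℕ) (x : ℕ → ℕ) : Prop := ∀ i, x i ≤ M

/-- The `n`-fold left shift `σ^n`. -/
def shiftn (n : ℕ) (x : ℕ → ℕ) : ℕ → ℕ := fun i => x (i + n)

/-- Reflection of a sequence: `x̄ = (M - x_i)_i`. -/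
def reflectSeq (M : ℕ) (x : ℕ → ℕ) : ℕ → ℕ := fun i => M - x i

/-- Strict lexicographic order on sequences. -/
def SeqLt (x y : ℕ → ℕ) : Prop := ∃ n, (∀ i < n, x i = y i) ∧ x n < y n

/-- Lexicographic order on sequences. -/
def SeqLe (x y : ℕ → ℕ) : Prop := SeqLt x y ∨ x = y

/-- Reflection of a word. -/
def reflectWord (M : ℕ) (w : List ℕ) : List ℕ := w.map (fun d => M - d)

/-- `w⁻`: decrement the last letter of a word. -/
def wordMinus (w : List ℕ) : List ℕ := w.dropLast ++ [w.getLastD 0 - 1]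

/-- `w⁺`: increment the last letter of a word. -/
def wordPlus (w : List ℕ) : List ℕ := w.dropLast ++ [w.getLastD 0 + 1]

/-- The periodic sequence `w^∞`. -/
def per (w : List ℕ) : ℕ → ℕ := fun i => w.getD (i % w.length) 0

/-- The sequence starting with the word `w` followed by the sequence `x`. -/
def wordThen (w : List ℕ) (x : ℕ → ℕ) : ℕ → ℕ :=
  fun i => if i < w.length then w.getD i 0 else x (i - w.length)

/-- The factor `x_{i+1} … x_{i+n}` of a sequence (0-indexed start `i`, length `n`). -/
def factor (x : ℕ → ℕ) (i n : ℕ) : List ℕ := (List.range n).map (fun j => x (i + j))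

/-- The prefix `x_1 … x_n` of a sequence. -/
def pre (x : ℕ → ℕ) (n : ℕ) : List ℕ := factor x 0 n

/-- The set `𝐕` of sequences `a` with `ā ≼ σⁿ(a) ≼ a` for all `n ≥ 0`. -/
def Vset (M : ℕ) : Set (ℕ → ℕ) :=
  {a | IsSeq M a ∧ ∀ n, SeqLe (reflectSeq M a) (shiftn n a) ∧ SeqLe (shiftn n a) a}

/-- The subshift `V_α` of sequences `x` with `ᾱ ≼ σⁿ(x) ≼ α` for all `n ≥ 0`. -/
def Vsub (M : ℕ) (α : ℕ → ℕ) : Set (ℕ → ℕ) :=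
  {x | IsSeq M x ∧ ∀ n, SeqLe (reflectSeq M α) (shiftn n x) ∧ SeqLe (shiftn n x) α}

/-- `B_n(X)`: the words of length `n` occurring as factors of elements of `X`. -/
def Bn (n : ℕ) (X : Set (ℕ → ℕ)) : Set (List ℕ) :=
  {w | w.length = n ∧ ∃ x ∈ X, ∃ i, w = factor x i n}

/-- The language of `X`: all factors of elements of `X`. -/
def Lang (X : Set (ℕ → ℕ)) : Set (List ℕ) :=
  {w | ∃ x ∈ X, ∃ i, w = factor x i w.length}

/-- Topological transitivity: any two nonempty factors can be connected within the language. -/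
def TopTransitive (X : Set (ℕ → ℕ)) : Prop :=
  ∀ u v, u ∈ Lang X → v ∈ Lang X → u ≠ [] → v ≠ [] → ∃ w, (u ++ w ++ v) ∈ Lang X

/-- Strict lexicographic order on words (intended for words of equal length). -/
def WordLt (u v : List ℕ) : Prop := List.Lex (· < ·) u v

/-- Lexicographic order on words (intended for words of equal length). -/
def WordLe (u v : List ℕ) : Prop := WordLt u v ∨ u = v

/-- Irreducible sequence: `a ∈ 𝐕` and `a_1…a_j (\overline{a_1…a_j}⁺)^∞ ≺ a` for every `j ≥ 1`
with `a_j ≥ 1` such that `(a_1…a_j⁻)^∞ ∈ 𝐕`. -/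
def IrrSeq (M : ℕ) (a : ℕ → ℕ) : Prop :=
  a ∈ Vset M ∧ ∀ j, 1 ≤ j → 1 ≤ a (j - 1) → per (wordMinus (pre a j)) ∈ Vset M →
    SeqLt (wordThen (pre a j) (per (wordPlus (reflectWord M (pre a j))))) a

/-- The Thue–Morse sequence: `tau i` is the parity of the number of `1`s in the binary
expansion of `i`. -/
def tau (i : ℕ) : ℕ := (Nat.digits 2 i).sum % 2

/-- The generalized Thue–Morse sequence `λ` (0-indexed: `lam M i = λ_{i+1}`);
`λ_i = k + τ_i - τ_{i-1}` if `M = 2k`, and `λ_i = k + τ_i` if `M = 2k+1`. -/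
def lam (M : ℕ) (i : ℕ) : ℕ :=
  if M % 2 = 0 then (M / 2 + tau (i + 1)) - tau i else M / 2 + tau (i + 1)

/-- The word `λ_1 … λ_L`. -/
def lamWord (M L : ℕ) : List ℕ := (List.range L).map (lam M)

/-- `2^(n-1)` if `M` is even, `2^n` if `M` is odd. -/
def xiLen (M n : ℕ) : ℕ := if M % 2 = 0 then 2 ^ (n - 1) else 2 ^ n

/-- The sequence `ξ(n)`. -/
def xi (M n : ℕ) : ℕ → ℕ :=
  wordThen (lamWord M (xiLen M n)) (per (wordPlus (reflectWord M (lamWord M (xiLen M n)))))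

/-- `2^n` if `M` is even, `2^(n+1)` if `M` is odd. -/
def starThreshold (M n : ℕ) : ℕ := if M % 2 = 0 then 2 ^ n else 2 ^ (n + 1)

/-- `*`-irreducible sequence. -/
def StarIrrSeq (M : ℕ) (a : ℕ → ℕ) : Prop :=
  a ∈ Vset M ∧ ∃ n, 1 ≤ n ∧ SeqLe (xi M (n + 1)) a ∧ SeqLt a (xi M n) ∧
    ∀ j, 1 ≤ a (j - 1) → per (wordMinus (pre a j)) ∈ Vset M → starThreshold M n < j →
      SeqLt (wordThen (pre a j) (per (wordPlus (reflectWord M (pre a j))))) a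

/-- The projection `π_q(x) = ∑_{i ≥ 1} x_i q^{-i}`. -/
noncomputable def piBase (q : ℝ) (x : ℕ → ℕ) : ℝ := ∑' i : ℕ, (x i : ℝ) / q ^ (i + 1)

/-- The set `𝐔_q` of sequences that are the unique expansion of their projection. -/
def Uset (M : ℕ) (q : ℝ) : Set (ℕ → ℕ) :=
  {a | IsSeq M a ∧ ∀ b, IsSeq M b → piBase q b = piBase q a → b = a}

/-- The entropy function `H(q) = limsup_n (log #B_n(𝐔_q))/n`. -/
noncomputable def entropy (M : ℕ) (q : ℝ) : ℝ :=
  Filter.limsup (fun n : ℕ => Real.log ((Bn n (Uset M q)).ncard) / (n : ℝ)) Filter.atTop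

/-- `α` is the quasi-greedy expansion of `1` in base `q`. -/
def QuasiGreedy (M : ℕ) (q : ℝ) (α : ℕ → ℕ) : Prop :=
  IsSeq M α ∧ piBase q α = 1 ∧ {n | α n ≠ 0}.Infinite ∧
    ∀ n, 1 ≤ n → α (n - 1) < M → SeqLe (shiftn n α) α

/-- The univoque set `𝒰_q ⊆ ℝ`. -/
def univoqueSet (M : ℕ) (q : ℝ) : Set ℝ :=
  {x | ∃! a : ℕ → ℕ, IsSeq M a ∧ piBase q a = x}

/-- The bifurcation set `E` of the entropy function. -/
def Eset (M : ℕ) : Set ℝ :=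
  {q | q ∈ Set.Ioc 1 (M + 1 : ℝ) ∧ ∀ ε : ℝ, 0 < ε →
    ∃ p ∈ Set.Ioo (q - ε) (q + ε) ∩ Set.Ioc 1 (M + 1 : ℝ), entropy M p ≠ entropy M q}

/-- `[pL, pR]` is an irreducible interval. -/
def IrrInterval (M : ℕ) (pL pR : ℝ) : Prop :=
  ∃ a : List ℕ, a ≠ [] ∧ (∀ d ∈ a, d ≤ M) ∧ a.getLastD 0 < M ∧
    IrrSeq M (per a) ∧ piBase pL (per a) = 1 ∧
    piBase pR (wordThen (wordPlus a) (per (reflectWord M a))) = 1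

/-- `[pL, pR]` is a `*`-irreducible interval. -/
def StarIrrInterval (M : ℕ) (pL pR : ℝ) : Prop :=
  ∃ a : List ℕ, a ≠ [] ∧ (∀ d ∈ a, d ≤ M) ∧ a.getLastD 0 < M ∧
    StarIrrSeq M (per a) ∧ piBase pL (per a) = 1 ∧
    piBase pR (wordThen (wordPlus a) (per (reflectWord M a))) = 1

/-- Primitive words. -/
def PrimitiveWord (M : ℕ) (a : List ℕ) : Prop :=
  (∀ d ∈ a, d ≤ M) ∧ ∀ i < a.length,
    WordLt (reflectWord M (a.take (a.length - i))) (a.drop i) ∧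
      WordLe (a.drop i) (a.take (a.length - i))

/-- The defining property of the reflection recurrence word:
`a_{s+1}…a_m⁻ = \overline{a_1…a_{m-s}}` with `s < m`. -/
def RRpred (M : ℕ) (a : List ℕ) (s : ℕ) : Prop :=
  s < a.length ∧ wordMinus (a.drop s) = reflectWord M (a.take (a.length - s))

instance (M : ℕ) (a : List ℕ) : DecidablePred (RRpred M a) := fun s =>
  inferInstanceAs (Decidable (s < a.length ∧
    wordMinus (a.drop s) = reflectWord M (a.take (a.length - s))))

/-- The reflection recurrence word `R(a)` of a (primitive) word `a`. -/
noncomputable def RR (M : ℕ) (a : List ℕ) : List ℕ :=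
  letI : Decidable (∃ s, RRpred M a s) := Classical.dec _
  if h : ∃ s, RRpred M a s then a.take (Nat.find h) else a

/-- Iterates `R^j(a)` of the reflection recurrence word. -/
noncomputable def RRiter (M : ℕ) (a : List ℕ) : ℕ → List ℕ
  | 0 => a
  | j + 1 => RR M (RRiter M a j)

/-- The set `𝐈_N`. -/
def INset (M N : ℕ) : Set (ℕ → ℕ) :=
  {a | IsSeq M a ∧ pre a (2 * N) = List.replicate (2 * N - 1) M ++ [0] ∧
    ∀ s, 2 ≤ s → WordLt (List.replicate N 0) (factor a (s * N) N) ∧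
      WordLt (factor a (s * N) N) (List.replicate N M)}

/-- The sequence `γ = k^∞` (`M = 2k`) or `((k+1)k)^∞` (`M = 2k+1`), the quasi-greedy expansion
of `1` in the generalized golden ratio base. -/
def gammaG (M : ℕ) : ℕ → ℕ :=
  if M % 2 = 0 then per [M / 2] else per [M / 2 + 1, M / 2]

/-- The sequence `g = ((k+1)(k-1))^∞` (`M = 2k`) or `((k+1)(k+1)kk)^∞` (`M = 2k+1`), the
quasi-greedy expansion of `1` in base `q_{NT}`. -/
def gNT (M : ℕ) : ℕ → ℕ :=
  if M % 2 = 0 then per [M / 2 + 1, M / 2 - 1]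
  else per [M / 2 + 1, M / 2 + 1, M / 2, M / 2]

lemma aux_lex_singleton {u v : ℕ} (h : List.Lex (· < ·) [u] [v]) : u < v := by
  cases h with
  | rel h => exact h
  | cons h => cases h

lemma aux_lex_append_singleton {w : List ℕ} {x y : ℕ}
    (h : List.Lex (· < ·) (w ++ [x]) (w ++ [y])) : x < y := by
  induction w with
  | nil => exact aux_lex_singleton h
  | cons a w ih =>
    cases h with
    | rel h => exact absurd h (lt_irrefl a)
    | cons h => exact ih h

lemma aux_getD_drop (a : List ℕ) (s j : ℕ) (h : j < (a.drop s).length) :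
    (a.drop s).getD j 0 = a.getD (s + j) 0 := by
  have h' : j < a.length - s := by simpa using h
  rw [List.getD_eq_getElem _ _ h, List.getElem_drop,
    List.getD_eq_getElem _ _ (by omega)]

lemma aux_getD_take (a : List ℕ) (n j : ℕ) (h : j < (a.take n).length) :
    (a.take n).getD j 0 = a.getD j 0 := by
  have h' : j < min n a.length := by simpa using h
  rw [List.getD_eq_getElem _ _ h, List.getElem_take,
    List.getD_eq_getElem _ _ (by omega)]

lemma aux_getLastD_getD (l : List ℕ) (hl : l ≠ []) :
    l.getLastD 0 = l.getD (l.length - 1) 0 := by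
  have h1 : l.length - 1 < l.length := by
    have := List.length_pos_iff.2 hl; omega
  rw [List.getLastD_eq_getLast?, List.getLast?_eq_getElem?,
    List.getElem?_eq_getElem h1, List.getD_eq_getElem _ _ h1]
  rfl

lemma aux_wordMinus_getD_lt (l : List ℕ) (j : ℕ) (hj : j < l.length - 1) :
    (wordMinus l).getD j 0 = l.getD j 0 := by
  have h1 : j < l.dropLast.length := by simp; omega
  rw [wordMinus, List.getD_append _ _ _ _ h1, List.getD_eq_getElem _ _ h1,
    List.getElem_dropLast, List.getD_eq_getElem _ _ (by simp at h1; omega)]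

lemma aux_wordMinus_getD_last (l : List ℕ) (hl : l ≠ []) :
    (wordMinus l).getD (l.length - 1) 0 = l.getD (l.length - 1) 0 - 1 := by
  have h1 : l.dropLast.length = l.length - 1 := by simp
  rw [wordMinus, List.getD_append_right _ _ _ _ (by omega), h1,
    Nat.sub_self, aux_getLastD_getD l hl]
  rfl

lemma aux_key (M : ℕ) (hM : 1 ≤ M) (a : List ℕ) (hlen : 2 ≤ a.length)
    (hprim : PrimitiveWord M a) (s : ℕ) (hs : RRpred M a s) : a.length ≤ 2 * s := by
  by_contra hcon
  set m := a.length with hm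
  have h2 : 2 * s < m := by omega
  have hsm : s < m := hs.1
  have hane : a ≠ [] := List.length_pos_iff.mp (by omega)
  -- digits are ≤ M
  have hdig : ∀ j, a.getD j 0 ≤ M := by
    intro j
    by_cases hj : j < m
    · rw [List.getD_eq_getElem _ _ hj]
      exact hprim.1 _ (List.getElem_mem hj)
    · rw [List.getD_eq_default _ _ (by omega)]; omega
  -- extract pointwise equalities from the RR predicate
  have hEq : ∀ j, (wordMinus (a.drop s)).getD j 0
      = (reflectWord M (a.take (m - s))).getD j 0 := by
    intro j; rw [hs.2]
  have hdroplen : (a.drop s).length = m - s := by simp; omega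
  have hdropne : a.drop s ≠ [] := by
    intro h; have := congrArg List.length h; simp at this; omega
  have hR : ∀ j, j < m - s → (reflectWord M (a.take (m - s))).getD j 0
      = M - a.getD j 0 := by
    intro j hj
    have hj' : j < (reflectWord M (a.take (m - s))).length := by
      simp [reflectWord]; omega
    rw [List.getD_eq_getElem _ _ hj']
    simp only [reflectWord, List.getElem_map, List.getElem_take]
    rw [List.getD_eq_getElem _ _ (by omega)]
  have hi : ∀ j, j < m - s - 1 → a.getD (s + j) 0 = M - a.getD j 0 := by
    intro j hj
    have h1 := hEq j
    rw [aux_wordMinus_getD_lt _ _ (by omega), aux_getD_drop _ _ _ (by omega),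
      hR j (by omega)] at h1
    exact h1
  have hii : a.getD (m - 1) 0 - 1 = M - a.getD (m - s - 1) 0 := by
    have h1 := hEq (m - s - 1)
    have hds : (a.drop s).length - 1 = m - s - 1 := by omega
    rw [← hds] at h1
    rw [aux_wordMinus_getD_last _ hdropne, hds, aux_getD_drop _ _ _ (by omega),
      hR _ (by omega)] at h1
    have hix : s + (m - s - 1) = m - 1 := by omega
    rw [hix] at h1
    exact h1
  -- last digit is ≥ 1, from primitivity at i = m - 1
  have hlast : 1 ≤ a.getD (m - 1) 0 := by
    have hp := (hprim.2 (m - 1) (by omega)).1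
    simp only [← hm] at hp
    have htk1 : a.take (m - (m - 1)) = [a.getD 0 0] := by
      have hone : m - (m - 1) = 0 + 1 := by omega
      rw [hone, List.take_succ, List.take_zero, List.getElem?_eq_getElem (by omega),
        List.getD_eq_getElem _ _ (show 0 < a.length by omega)]
      rfl
    have hdr : a.drop (m - 1) = [a.getD (m - 1) 0] := by
      apply List.ext_getElem (by simp; omega)
      intro n h1 h2
      simp only [List.length_drop] at h1
      have hn : n = 0 := by omega
      subst hn
      rw [List.getElem_drop, List.getD_eq_getElem _ _ (show m - 1 < a.length by omega)]
      rfl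
    rw [htk1, hdr] at hp
    have hrefl : reflectWord M [a.getD 0 0] = [M - a.getD 0 0] := rfl
    rw [hrefl] at hp
    have := aux_lex_singleton hp
    omega
  rcases Nat.eq_zero_or_pos s with hs0 | hs1
  · -- s = 0 : parity contradiction
    subst hs0
    have h1 := hi 0 (by omega)
    have h2' := hii
    have d0 := hdig 0
    have d1 := hdig (m - 1)
    simp only [Nat.add_zero, Nat.sub_zero, Nat.zero_add] at h1 h2'
    omega
  · -- s ≥ 1 : contradiction with primitivity at i = 2s
    have e1 : a.getD (m - 1) 0 = a.getD (m - 2 * s - 1) 0 + 1 := by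
      have h1 := hi (m - 2 * s - 1) (by omega)
      have hix : s + (m - 2 * s - 1) = m - s - 1 := by omega
      rw [hix] at h1
      have := hdig (m - 2 * s - 1)
      omega
    have e2 : ∀ j, j < m - 2 * s - 1 → a.getD (2 * s + j) 0 = a.getD j 0 := by
      intro j hj
      have h1 := hi (s + j) (by omega)
      have h2' := hi j (by omega)
      have hix : s + (s + j) = 2 * s + j := by omega
      rw [hix] at h1
      have := hdig j
      omega
    have hdl : a.drop (2 * s)
        = a.take (m - 2 * s - 1) ++ [a.getD (m - 2 * s - 1) 0 + 1] := by
      apply List.ext_getElem (by simp; omega)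
      intro n h1 h2
      simp only [List.length_drop] at h1
      have htl : (a.take (m - 2 * s - 1)).length = m - 2 * s - 1 := by simp; omega
      rcases Nat.lt_or_ge n (m - 2 * s - 1) with hn | hn
      · rw [List.getElem_drop, List.getElem_append_left (by omega), List.getElem_take]
        have h3 := e2 n hn
        rw [List.getD_eq_getElem _ _ (show 2 * s + n < a.length by omega)] at h3
        exact h3.trans (List.getD_eq_getElem _ _ (by omega))
      · have hn' : n = m - 2 * s - 1 := by omega
        subst hn'
        rw [List.getElem_drop, List.getElem_append_right (by omega)]
        simp only [htl, Nat.sub_self, List.getElem_singleton]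
        rw [← List.getD_eq_getElem a 0 (by omega)]
        have hix : 2 * s + (m - 2 * s - 1) = m - 1 := by omega
        rw [hix, e1]
    have htk2 : a.take (m - 2 * s)
        = a.take (m - 2 * s - 1) ++ [a.getD (m - 2 * s - 1) 0] := by
      have hms : m - 2 * s = (m - 2 * s - 1) + 1 := by omega
      conv_lhs => rw [hms]
      rw [List.take_succ, List.getElem?_eq_getElem (by omega),
        List.getD_eq_getElem _ _ (show m - 2 * s - 1 < a.length by omega)]
      rfl
    have hp := (hprim.2 (2 * s) h2).2
    simp only [← hm] at hp
    rw [hdl, htk2] at hp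
    rcases hp with hp | hp
    · have := aux_lex_append_singleton hp
      omega
    · have := List.append_cancel_left hp
      simp at this

/-- For a primitive word `a` of length `m ≥ 2`, the reflection recurrence
word satisfies `m/2 ≤ |R(a)| ≤ m`. -/
theorem statement9 (M : ℕ) (hM : 1 ≤ M) (a : List ℕ) (hlen : 2 ≤ a.length)
    (hprim : PrimitiveWord M a) :
    a.length ≤ 2 * (RR M a).length ∧ (RR M a).length ≤ a.length := by
  rw [RR]
  split
  · rename_i h
    have hspec := Nat.find_spec h
    have hkey := aux_key M hM a hlen hprim _ hspec
    have hlt := hspec.1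
    simp only [List.length_take]
    constructor
    · omega
    · omega
  · omega

end Paper
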